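/- Let G be a simple graph on a finite vertex set V and let a, b, c ∈ V be pairwise distinct vertices, each of degree 1 in G, with Y = {a, b, c}. Suppose |∂(Y)| = 1. Then exactly one vertex of Y has its unique neighbor outside Y, and the other two vertices of Y are adjacent to each other. -/
import Mathlib


open Finset

variable {V : Type*}

lemma uniq_nbr [Fintype V] (G : SimpleGraph V) [DecidableRel G.Adj] {x y z : V}
    (h : G.degree x = 1) (hy : G.Adj x y) (hz : G.Adj x z) : y = z := by
  have h1 : (G.neighborFinset x).card ≤ 1 := le_of_eq h
  exact Finset.card_le_one.mp h1 y ((G.mem_neighborFinset x y).mpr hy)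
    z ((G.mem_neighborFinset x z).mpr hz)

lemma ex_nbr [Fintype V] (G : SimpleGraph V) [DecidableRel G.Adj] {x : V}
    (h : G.degree x = 1) : ∃ y, G.Adj x y := by
  have : 0 < (G.neighborFinset x).card := by rw [G.card_neighborFinset_eq_degree, h]; norm_num
  obtain ⟨y, hy⟩ := Finset.card_pos.mp this
  exact ⟨y, (G.mem_neighborFinset x y).mp hy⟩

/-- The size of the edge cut `∂(S)`: the number of edges of `G` with exactly one endpoint
in `S`. -/
def edgeCutSize [Fintype V] [DecidableEq V] (G : SimpleGraph V) [DecidableRel G.Adj]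
    (S : Finset V) : ℕ :=
  ((S ×ˢ Sᶜ).filter fun p => G.Adj p.1 p.2).card

/-- The clause gadget of the NP-hardness reduction.  Let `a, b, c` be pairwise distinct
vertices of degree `1` with `Y = {a, b, c}` and `|∂(Y)| = 1`.  Then exactly one vertex of
`Y` has its unique neighbor outside `Y`, and the other two vertices of `Y` are adjacent to
each other. -/
theorem clause_gadget [Fintype V] [DecidableEq V]
    (G : SimpleGraph V) [DecidableRel G.Adj] (a b c : V)
    (hab : a ≠ b) (hac : a ≠ c) (hbc : b ≠ c)
    (hda : G.degree a = 1) (hdb : G.degree b = 1) (hdc : G.degree c = 1)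
    (hcut : edgeCutSize G {a, b, c} = 1) :
    ((∀ z, G.Adj a z → z ∉ ({a, b, c} : Finset V)) ∧ G.Adj b c ∧
        ¬ ((∀ z, G.Adj b z → z ∉ ({a, b, c} : Finset V)) ∧ G.Adj a c) ∧
        ¬ ((∀ z, G.Adj c z → z ∉ ({a, b, c} : Finset V)) ∧ G.Adj a b)) ∨
      ((∀ z, G.Adj b z → z ∉ ({a, b, c} : Finset V)) ∧ G.Adj a c ∧
        ¬ ((∀ z, G.Adj a z → z ∉ ({a, b, c} : Finset V)) ∧ G.Adj b c) ∧
        ¬ ((∀ z, G.Adj c z → z ∉ ({a, b, c} : Finset V)) ∧ G.Adj a b)) ∨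
      ((∀ z, G.Adj c z → z ∉ ({a, b, c} : Finset V)) ∧ G.Adj a b ∧
        ¬ ((∀ z, G.Adj a z → z ∉ ({a, b, c} : Finset V)) ∧ G.Adj b c) ∧
        ¬ ((∀ z, G.Adj b z → z ∉ ({a, b, c} : Finset V)) ∧ G.Adj a c)) := by
  by_cases hp : G.Adj a b
  · -- a ~ b, so ¬ a~c and ¬ b~c; c's neighbor is outside
    have hq : ¬ G.Adj a c := fun hq => hbc (uniq_nbr G hda hp hq)
    have hr : ¬ G.Adj b c := fun hr => hac (uniq_nbr G hdb hp.symm hr)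
    refine Or.inr (Or.inr ⟨?_, hp, fun h => hr h.2, fun h => hq h.2⟩)
    intro z hz
    simp only [mem_insert, mem_singleton]
    rintro (rfl | rfl | rfl)
    · exact hq hz.symm
    · exact hr hz.symm
    · exact G.irrefl hz
  · by_cases hq : G.Adj a c
    · -- a ~ c, so ¬ b~c; b's neighbor is outside
      have hr : ¬ G.Adj b c := fun hr => hab (uniq_nbr G hdc hq.symm hr.symm)
      refine Or.inr (Or.inl ⟨?_, hq, fun h => hr h.2, fun h => hp h.2⟩)
      intro z hz
      simp only [mem_insert, mem_singleton]
      rintro (rfl | rfl | rfl)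
      · exact hp hz.symm
      · exact G.irrefl hz
      · exact hr hz
    · by_cases hr : G.Adj b c
      · -- b ~ c; a's neighbor is outside
        refine Or.inl ⟨?_, hr, fun h => hq h.2, fun h => hp h.2⟩
        intro z hz
        simp only [mem_insert, mem_singleton]
        rintro (rfl | rfl | rfl)
        · exact G.irrefl hz
        · exact hp hz
        · exact hq hz
      · -- no internal edge: all three neighbors are outside, cut ≥ 3, contradiction
        exfalso
        obtain ⟨na, ha⟩ := ex_nbr G hda
        obtain ⟨nb, hb⟩ := ex_nbr G hdb
        obtain ⟨nc, hc⟩ := ex_nbr G hdc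
        have hsub : ({(a, na), (b, nb), (c, nc)} : Finset (V × V)) ⊆
            ((({a, b, c} : Finset V) ×ˢ ({a, b, c} : Finset V)ᶜ).filter
              fun p => G.Adj p.1 p.2) := by
          intro p hpmem
          simp only [mem_insert, mem_singleton] at hpmem
          rcases hpmem with rfl | rfl | rfl <;>
            simp only [mem_filter, mem_product, mem_compl, mem_insert, mem_singleton] <;>
            refine ⟨⟨by tauto, ?_⟩, by assumption⟩
          · rintro (rfl | rfl | rfl)
            · exact G.irrefl ha
            · exact hp ha
            · exact hq ha
          · rintro (rfl | rfl | rfl)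
            · exact hp hb.symm
            · exact G.irrefl hb
            · exact hr hb
          · rintro (rfl | rfl | rfl)
            · exact hq hc.symm
            · exact hr hc.symm
            · exact G.irrefl hc
        have hcard : ({(a, na), (b, nb), (c, nc)} : Finset (V × V)).card = 3 := by
          rw [Finset.card_insert_of_notMem (by simp [Prod.ext_iff, hab, hac]),
            Finset.card_insert_of_notMem (by simp [Prod.ext_iff, hbc]),
            Finset.card_singleton]
        have h3 : 3 ≤ edgeCutSize G {a, b, c} := by
          rw [edgeCutSize, ← hcard]
          exact Finset.card_le_card hsub
        omega
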